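/- Let S ⊆ ℤ₂⁵ be an affine subspace of dimension 3, and suppose no coordinate is constant on S, i.e., for every i ∈ {1,…,5} there exist u, v ∈ S with uᵢ ≠ vᵢ. Then there exists a free set X ⊆ {1,…,5} of size 3 whose indices are cyclically consecutive, i.e., X = {i, i+1, i+2} with indices taken modulo 5. -/

import Mathlib

/-- `S` is an affine subspace of `ℤ₂ⁿ` of dimension `k`. -/
def IsAffineSubspaceDim {n : ℕ} (S : Set (Fin n → ZMod 2)) (k : ℕ) : Prop :=
  ∃ (x₀ : Fin n → ZMod 2) (V : Submodule (ZMod 2) (Fin n → ZMod 2)),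
    Module.finrank (ZMod 2) ↥V = k ∧ S = {x | x + x₀ ∈ V}

/-- `X` is a set of free variables for `S`: the projection of `S` onto the
coordinates in `X` is a bijection onto `{0,1}^X`. -/
def IsFreeSet {n : ℕ} (S : Set (Fin n → ZMod 2)) (X : Finset (Fin n)) : Prop :=
  Set.BijOn (fun (x : Fin n → ZMod 2) => (fun i : {i // i ∈ X} => x i.1)) S Set.univ

/- ### Auxiliary machinery -/

/-- Witness pattern: the vector supported on `{j, j+1}` with values `P j`, `Q j`. -/
def WB (P Q : Fin 5 → Bool) (j k : Fin 5) : Bool :=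
  if k = j then P j else if k = j + 1 then Q j else false

set_option maxHeartbeats 10000000 in
set_option maxRecDepth 100000 in
set_option synthInstance.maxHeartbeats 400000 in
set_option synthInstance.maxSize 1000000 in
theorem keyU : ∀ P0 P1 P2 P3 P4 Q0 Q1 Q2 Q3 Q4 : Bool,
  (∀ j : Fin 5, (![P0,P1,P2,P3,P4] j || ![Q0,Q1,Q2,Q3,Q4] j) = true) →
  ∃ a b c i : Fin 5,
    (WB ![P0,P1,P2,P3,P4] ![Q0,Q1,Q2,Q3,Q4] a i = false ∧
     WB ![P0,P1,P2,P3,P4] ![Q0,Q1,Q2,Q3,Q4] b i = false ∧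
     WB ![P0,P1,P2,P3,P4] ![Q0,Q1,Q2,Q3,Q4] c i = false) ∧
    ∀ x y z : Bool,
      (∀ k : Fin 5, xor (x && WB ![P0,P1,P2,P3,P4] ![Q0,Q1,Q2,Q3,Q4] a k)
        (xor (y && WB ![P0,P1,P2,P3,P4] ![Q0,Q1,Q2,Q3,Q4] b k)
             (z && WB ![P0,P1,P2,P3,P4] ![Q0,Q1,Q2,Q3,Q4] c k)) = false) →
      x = false ∧ y = false ∧ z = false := by decide

/-- Bool to `ZMod 2`. -/
def z2 (b : Bool) : ZMod 2 := if b then 1 else 0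

lemma card_V (V : Submodule (ZMod 2) (Fin 5 → ZMod 2))
    (h : Module.finrank (ZMod 2) ↥V = 3) : Nat.card ↥V = 8 := by
  have b := Module.finBasis (ZMod 2) ↥V
  rw [h] at b
  rw [Nat.card_congr b.equivFun.toEquiv]
  simp [Nat.card_eq_fintype_card]

lemma free_of_ker (x₀ : Fin 5 → ZMod 2) (V : Submodule (ZMod 2) (Fin 5 → ZMod 2))
    (hrank : Module.finrank (ZMod 2) ↥V = 3)
    (X : Finset (Fin 5)) (hX : X.card = 3)
    (hker : ∀ w ∈ V, (∀ k ∈ X, w k = 0) → w = 0) :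
    IsFreeSet {x | x + x₀ ∈ V} X := by
  set S : Set (Fin 5 → ZMod 2) := {x | x + x₀ ∈ V} with hs
  have hchar : ∀ a b c : ZMod 2, (a + c) + (b + c) = a + b := by decide
  have hchar2 : ∀ a c : ZMod 2, (a + c) + c = a := by decide
  have l3 : ∀ a b : ZMod 2, a + b = 0 → a = b := by decide
  have l4 : ∀ a b : ZMod 2, a = b → a + b = 0 := by decide
  have hsum : ∀ u v : Fin 5 → ZMod 2, u ∈ S → v ∈ S → u + v ∈ V := by
    intro u v hu hv
    have h : u + v = (u + x₀) + (v + x₀) := by funext k; exact (hchar _ _ _).symm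
    rw [h]; exact V.add_mem hu hv
  have hinj : Set.InjOn (fun (x : Fin 5 → ZMod 2) => fun i : {i // i ∈ X} => x i.1) S := by
    intro u hu v hv he
    have hw : u + v = 0 := by
      apply hker _ (hsum u v hu hv)
      intro k hk
      exact l4 _ _ (congrFun he ⟨k, hk⟩)
    funext k
    exact l3 _ _ (congrFun hw k)
  have himg : S = (fun v => v + x₀) '' (V : Set (Fin 5 → ZMod 2)) := by
    ext x
    constructor
    · intro hx
      exact ⟨x + x₀, hx, by funext k; exact hchar2 _ _⟩
    · rintro ⟨v, hv, rfl⟩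
      show (v + x₀) + x₀ ∈ V
      have : (v + x₀) + x₀ = v := by funext k; exact hchar2 _ _
      rwa [this]
  have hScard : S.ncard = 8 := by
    rw [himg, Set.ncard_image_of_injective _ (add_left_injective x₀)]
    exact card_V V hrank
  have htar : (Set.univ : Set ({i // i ∈ X} → ZMod 2)).ncard = 8 := by
    rw [Set.ncard_univ]
    simp [Nat.card_eq_fintype_card, Fintype.card_fun, hX]
  have himage : ((fun (x : Fin 5 → ZMod 2) => fun i : {i // i ∈ X} => x i.1) '' S) = Set.univ := by
    apply Set.eq_of_subset_of_ncard_le (Set.subset_univ _)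
    rw [Set.ncard_image_of_injOn hinj, hScard, htar]
  exact ⟨fun x _ => Set.mem_univ _, hinj, himage.symm.subset⟩

set_option maxRecDepth 10000 in
/-- indices `i, i+1, i+2` are taken cyclically (mod 5), which is
exactly addition in `Fin 5`. -/
theorem cyclically_consecutive_free_set
    (S : Set (Fin 5 → ZMod 2)) (hS : IsAffineSubspaceDim S 3)
    (hnc : ∀ i : Fin 5, ∃ u ∈ S, ∃ v ∈ S, u i ≠ v i) :
    ∃ i : Fin 5, ({i, i + 1, i + 2} : Finset (Fin 5)).card = 3 ∧
      IsFreeSet S ({i, i + 1, i + 2} : Finset (Fin 5)) := by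
  obtain ⟨x₀, V, hrank, hSV⟩ := hS
  subst hSV
  by_contra hcon
  push_neg at hcon
  have cardX : ∀ i : Fin 5, ({i, i+1, i+2} : Finset (Fin 5)).card = 3 := by decide
  have hnotfree : ∀ i : Fin 5,
      ¬ IsFreeSet {x | x + x₀ ∈ V} ({i, i+1, i+2} : Finset (Fin 5)) :=
    fun i => hcon i (cardX i)
  -- scalar helpers
  have hchar : ∀ a b c : ZMod 2, (a + c) + (b + c) = a + b := by decide
  have l2 : ∀ a b : ZMod 2, a ≠ b → a + b = 1 := by decide
  have l3 : ∀ a b : ZMod 2, a + b = 0 → a = b := by decide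
  have five : ∀ j k : Fin 5, k = j ∨ k = j+1 ∨ k = j+2 ∨ k = j+3 ∨ k = j+4 := by decide
  -- non-constancy in terms of V
  have hncV : ∀ i : Fin 5, ∃ t, t ∈ V ∧ t i = 1 := by
    intro i
    obtain ⟨u, hu, v, hv, hne⟩ := hnc i
    refine ⟨u + v, ?_, l2 _ _ hne⟩
    have h : u + v = (u + x₀) + (v + x₀) := by funext k; exact (hchar _ _ _).symm
    rw [h]; exact V.add_mem hu hv
  -- kernel witnesses for each cyclic pair
  have ee1 : ∀ j : Fin 5, (j+2)+1 = j+3 := by decide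
  have ee2 : ∀ j : Fin 5, (j+2)+2 = j+4 := by decide
  have hker : ∀ j : Fin 5, ∃ w, w ∈ V ∧ w (j+2) = 0 ∧ w (j+3) = 0 ∧ w (j+4) = 0 ∧ w ≠ 0 := by
    intro j
    by_contra hnw
    push_neg at hnw
    apply hnotfree (j+2)
    rw [ee1 j, ee2 j]
    apply free_of_ker x₀ V hrank _ (by rw [← ee1 j, ← ee2 j]; exact cardX (j+2))
    intro w hw hvan
    exact hnw w hw (hvan _ (by simp)) (hvan _ (by simp)) (hvan _ (by simp))
  choose w hwV hv2 hv3 hv4 hwne using hker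
  set P : Fin 5 → Bool := fun j => decide (w j j = 1) with hP
  set Q : Fin 5 → Bool := fun j => decide (w j (j+1) = 1) with hQ
  have hPQ : ![P 0, P 1, P 2, P 3, P 4] = P := by funext k; fin_cases k <;> rfl
  have hQQ : ![Q 0, Q 1, Q 2, Q 3, Q 4] = Q := by funext k; fin_cases k <;> rfl
  have hnzB : ∀ j : Fin 5, (P j || Q j) = true := by
    intro j
    have lnz : ∀ a b : ZMod 2, ¬(a = 0 ∧ b = 0) →
        (decide (a = 1) || decide (b = 1)) = true := by decide
    apply lnz
    rintro ⟨h1, h2⟩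
    apply hwne j
    funext k
    rcases five j k with rfl | rfl | rfl | rfl | rfl
    · exact h1
    · exact h2
    · exact hv2 j
    · exact hv3 j
    · exact hv4 j
  have hkey := keyU (P 0) (P 1) (P 2) (P 3) (P 4) (Q 0) (Q 1) (Q 2) (Q 3) (Q 4)
  rw [hPQ, hQQ] at hkey
  obtain ⟨a, b, c, i, ⟨ha, hb, hc⟩, hindep⟩ := hkey hnzB
  -- representation of witnesses via the Bool pattern
  have hrepr : ∀ j k, w j k = z2 (WB P Q j k) := by
    have lz : ∀ x : ZMod 2, z2 (decide (x = 1)) = x := by decide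
    have n1 : ∀ j : Fin 5, j+1 ≠ j := by decide
    have n2 : ∀ j : Fin 5, j+2 ≠ j ∧ j+2 ≠ j+1 := by decide
    have n3 : ∀ j : Fin 5, j+3 ≠ j ∧ j+3 ≠ j+1 := by decide
    have n4 : ∀ j : Fin 5, j+4 ≠ j ∧ j+4 ≠ j+1 := by decide
    intro j k
    rcases five j k with rfl | rfl | rfl | rfl | rfl
    · rw [WB, if_pos rfl, hP, lz]
    · rw [WB, if_neg (n1 j), if_pos rfl, hQ, lz]
    · rw [WB, if_neg (n2 j).1, if_neg (n2 j).2]; exact hv2 j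
    · rw [WB, if_neg (n3 j).1, if_neg (n3 j).2]; exact hv3 j
    · rw [WB, if_neg (n4 j).1, if_neg (n4 j).2]; exact hv4 j
  obtain ⟨t, htV, hti⟩ := hncV i
  -- the injection (ZMod 2)⁴ → V
  set f : (ZMod 2 × ZMod 2 × ZMod 2 × ZMod 2) → ↥V := fun r =>
    ⟨r.1 • w a + r.2.1 • w b + r.2.2.1 • w c + r.2.2.2 • t,
      V.add_mem (V.add_mem (V.add_mem (V.smul_mem _ (hwV a)) (V.smul_mem _ (hwV b)))
        (V.smul_mem _ (hwV c))) (V.smul_mem _ htV)⟩ with hf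
  have hfinj : Function.Injective f := by
    have ldiff : ∀ x x' y y' z z' u u' A B C T : ZMod 2,
        x*A + y*B + z*C + u*T = x'*A + y'*B + z'*C + u'*T →
        (x+x')*A + (y+y')*B + (z+z')*C + (u+u')*T = 0 := by decide
    have lU : ∀ x y z u : ZMod 2, x*0 + y*0 + z*0 + u*1 = 0 → u = 0 := by decide
    have lRem : ∀ x y z u A B C T : ZMod 2, u = 0 →
        x*A + y*B + z*C + u*T = 0 → x*A + y*B + z*C = 0 := by decide
    have lbool : ∀ (X Y Z : ZMod 2) (A B C : Bool), X * z2 A + Y * z2 B + Z * z2 C = 0 →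
        xor (decide (X=1) && A) (xor (decide (Y=1) && B) (decide (Z=1) && C)) = false := by
      decide
    have lb0 : ∀ x : ZMod 2, decide (x = 1) = false → x = 0 := by decide
    rintro ⟨x1, y1, z1, u1⟩ ⟨x2, y2, z2', u2⟩ h
    have hval : x1 • w a + y1 • w b + z1 • w c + u1 • t
        = x2 • w a + y2 • w b + z2' • w c + u2 • t := congrArg Subtype.val h
    have hpt : ∀ k, x1 * w a k + y1 * w b k + z1 * w c k + u1 * t k
        = x2 * w a k + y2 * w b k + z2' * w c k + u2 * t k := by
      intro k
      have := congrFun hval k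
      simpa using this
    have hzero : ∀ k, (x1+x2) * w a k + (y1+y2) * w b k + (z1+z2') * w c k
        + (u1+u2) * t k = 0 := fun k => ldiff _ _ _ _ _ _ _ _ _ _ _ _ (hpt k)
    have ea : w a i = 0 := by rw [hrepr a i, ha]; rfl
    have eb : w b i = 0 := by rw [hrepr b i, hb]; rfl
    have ec : w c i = 0 := by rw [hrepr c i, hc]; rfl
    have hU : u1 + u2 = 0 := by
      have := hzero i
      rw [ea, eb, ec, hti] at this
      exact lU _ _ _ _ this
    have hzero3 : ∀ k, (x1+x2) * w a k + (y1+y2) * w b k + (z1+z2') * w c k = 0 :=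
      fun k => lRem _ _ _ _ _ _ _ _ hU (hzero k)
    have hboolzero : ∀ k, xor ((decide ((x1+x2) = 1)) && WB P Q a k)
        (xor ((decide ((y1+y2) = 1)) && WB P Q b k)
             ((decide ((z1+z2') = 1)) && WB P Q c k)) = false := by
      intro k
      apply lbool
      rw [← hrepr a k, ← hrepr b k, ← hrepr c k]
      exact hzero3 k
    obtain ⟨hx, hy, hz⟩ := hindep _ _ _ hboolzero
    have hX0 := lb0 _ hx
    have hY0 := lb0 _ hy
    have hZ0 := lb0 _ hz
    simp only [Prod.mk.injEq]
    exact ⟨l3 _ _ hX0, l3 _ _ hY0, l3 _ _ hZ0, l3 _ _ hU⟩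
  have hle : Nat.card (ZMod 2 × ZMod 2 × ZMod 2 × ZMod 2) ≤ Nat.card ↥V :=
    Nat.card_le_card_of_injective f hfinj
  rw [card_V V hrank] at hle
  simp [Nat.card_eq_fintype_card] at hle
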